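/- Local strong convexity of the modified cost near the unconstrained minimizer: Suppose θ* ∈ S and let λ_min(H) > 0 denote the smallest eigenvalue of H. Then there exist r > 0 and μ* > 0 such that the closed ball of radius r around θ* is contained in S and for every μ ∈ (0, μ*) and every θ with ‖θ − θ*‖ ≤ r, the Hessian satisfies ∇²Ĵ_μ(θ) ⪰ (λ_min(H)/2)·I, i.e., ⟨v, ∇²Ĵ_μ(θ) v⟩ ≥ (λ_min(H)/2)·‖v‖² for all v ∈ ℝⁿ. -/

import Mathlib

open Real Set
open scoped RealInnerProductSpace

theorem local_strong_convexity
    {n : ℕ} (hn : 1 ≤ n)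
    (Jstar : ℝ) (θs : EuclideanSpace ℝ (Fin n))
    (H : EuclideanSpace ℝ (Fin n) →L[ℝ] EuclideanSpace ℝ (Fin n))
    (Hsymm : ∀ x y : EuclideanSpace ℝ (Fin n), ⟪H x, y⟫ = ⟪x, H y⟫)
    (Hpos : ∀ x : EuclideanSpace ℝ (Fin n), x ≠ 0 → 0 < ⟪x, H x⟫)
    (J : EuclideanSpace ℝ (Fin n) → ℝ)
    (hJdef : ∀ θ, J θ = Jstar + (1 / 2) * ⟪θ - θs, H (θ - θs)⟫)
    (h : EuclideanSpace ℝ (Fin n) → ℝ) (hh : ContDiff ℝ 2 h)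
    (S : Set (EuclideanSpace ℝ (Fin n))) (hSdef : S = {θ | 0 < h θ})
    (hSne : S.Nonempty)
    (Jhat : ℝ → EuclideanSpace ℝ (Fin n) → ℝ)
    (hJhatdef : ∀ μ θ, Jhat μ θ = J θ - μ * Real.log (h θ))
    (lam : ℝ) (hlam_pos : 0 < lam)
    (hlam_lb : ∀ v : EuclideanSpace ℝ (Fin n), lam * ‖v‖ ^ 2 ≤ ⟪v, H v⟫)
    (hlam_eig : ∃ v : EuclideanSpace ℝ (Fin n), v ≠ 0 ∧ ⟪v, H v⟫ = lam * ‖v‖ ^ 2)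
    (hθsS : θs ∈ S) :
    ∃ rad > 0, ∃ μstar > 0, Metric.closedBall θs rad ⊆ S ∧
      ∀ μ ∈ Set.Ioo 0 μstar, ∀ θ : EuclideanSpace ℝ (Fin n), ‖θ - θs‖ ≤ rad →
        ∀ v, (lam / 2) * ‖v‖ ^ 2 ≤ ⟪v, fderiv ℝ (gradient (Jhat μ)) θ v⟫ := by
  classical
  
  set U : Set (EuclideanSpace ℝ (Fin n)) := {θ | 0 < h θ} with hUdef
  have hU : IsOpen U := isOpen_lt continuous_const hh.continuous
  have hθsU : θs ∈ U := by rw [hSdef] at hθsS; exact hθsS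
  obtain ⟨ε, hε, hballU⟩ := Metric.isOpen_iff.1 hU θs hθsU
  set rad : ℝ := ε / 2 with hraddef
  have hrad : 0 < rad := by positivity
  have hballsub : Metric.closedBall θs rad ⊆ U := fun x hx => by
    apply hballU
    have := Metric.mem_closedBall.1 hx
    exact Metric.mem_ball.2 (lt_of_le_of_lt this (by linarith))
  -- log barrier
  set φ : EuclideanSpace ℝ (Fin n) → ℝ := fun θ => Real.log (h θ) with hφdef
  have hφC2 : ContDiffOn ℝ 2 φ U := by
    intro θ hθ
    exact ((Real.contDiffAt_log.mpr (ne_of_gt hθ)).comp θ hh.contDiffAt).contDiffWithinAt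
  have hφ1 : ContDiffOn ℝ 1 (fderiv ℝ φ) U := hφC2.fderiv_of_isOpen hU (by norm_num)
  set L := (InnerProductSpace.toDual ℝ (EuclideanSpace ℝ (Fin n))).symm with hLdef
  set G : EuclideanSpace ℝ (Fin n) → EuclideanSpace ℝ (Fin n) := fun θ => L (fderiv ℝ φ θ) with hGdef
  have hGcd : ContDiffOn ℝ 1 G U := L.contDiff.comp_contDiffOn hφ1
  have hGdiff : DifferentiableOn ℝ G U := hGcd.differentiableOn one_ne_zero
  have hG' : ContinuousOn (fderiv ℝ G) U := hGcd.continuousOn_fderiv_of_isOpen hU le_rfl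
  -- bound on Hessian of barrier over the closed ball
  obtain ⟨C, hC⟩ := (isCompact_closedBall θs rad).exists_bound_of_continuousOn
    (hG'.mono hballsub)
  set C' : ℝ := max C 0 + 1 with hC'def
  have hC'pos : 0 < C' := by positivity
  set μstar : ℝ := lam / (2 * C') with hμdef
  have hμstar : 0 < μstar := by positivity
  -- gradient formula on U
  have hgrad : ∀ μ : ℝ, ∀ x ∈ U, HasGradientAt (Jhat μ) (H (x - θs) - μ • G x) x := by
    intro μ x hx
    rw [hasGradientAt_iff_hasFDerivAt]
    have hA : HasFDerivAt (fun θ : EuclideanSpace ℝ (Fin n) => θ - θs) (ContinuousLinearMap.id ℝ (EuclideanSpace ℝ (Fin n))) x :=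
      (hasFDerivAt_id x).sub_const θs
    have hB : HasFDerivAt (fun θ : EuclideanSpace ℝ (Fin n) => H (θ - θs)) (H.comp (ContinuousLinearMap.id ℝ (EuclideanSpace ℝ (Fin n)))) x :=
      H.hasFDerivAt.comp x hA
    have hq : HasFDerivAt (fun θ : EuclideanSpace ℝ (Fin n) => ⟪θ - θs, H (θ - θs)⟫)
        ((fderivInnerCLM ℝ (x - θs, H (x - θs))).comp
          ((ContinuousLinearMap.id ℝ (EuclideanSpace ℝ (Fin n))).prod (H.comp (ContinuousLinearMap.id ℝ (EuclideanSpace ℝ (Fin n)))))) x :=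
      hA.inner ℝ hB
    have hφd : HasFDerivAt φ (fderiv ℝ φ x) x :=
      ((hφC2.differentiableOn (by norm_num)) x hx).differentiableAt
        (hU.mem_nhds hx) |>.hasFDerivAt
    have hcomb := ((hq.const_mul (1/2 : ℝ)).const_add Jstar).sub (hφd.const_mul μ)
    have hfun : (Jhat μ) = fun θ : EuclideanSpace ℝ (Fin n) =>
        Jstar + (1/2 : ℝ) * ⟪θ - θs, H (θ - θs)⟫ - μ * φ θ := by
      funext θ; rw [hJhatdef, hJdef]
    rw [hfun]
    refine hcomb.congr_fderiv ?_
    symm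
    ext v
    simp only [ContinuousLinearMap.coe_sub', Pi.sub_apply, ContinuousLinearMap.coe_smul',
      Pi.smul_apply, ContinuousLinearMap.coe_comp', Function.comp_apply,
      ContinuousLinearMap.prod_apply, ContinuousLinearMap.coe_id', id_eq,
      fderivInnerCLM_apply, smul_eq_mul]
    have h1 : ⟪H (x - θs) - μ • G x, v⟫ = ⟪H (x - θs), v⟫ - μ * ⟪G x, v⟫ := by
      rw [inner_sub_left, real_inner_smul_left]
    have h2 : ⟪G x, v⟫ = fderiv ℝ φ x v := by
      rw [hGdef]
      exact InnerProductSpace.toDual_symm_apply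
    have h3 : ⟪x - θs, H v⟫ = ⟪H (x - θs), v⟫ := (Hsymm (x - θs) v).symm
    have h4 : ⟪v, H (x - θs)⟫ = ⟪H (x - θs), v⟫ := real_inner_comm _ _
    rw [InnerProductSpace.toDual_apply_apply, h1, h2]
    ring_nf
    rw [h3, h4]
    ring
  refine ⟨rad, hrad, μstar, hμstar, ?_, ?_⟩
  · rw [hSdef]; exact hballsub
  intro μ hμ θ hθ v
  have hθU : θ ∈ U := hballsub (Metric.mem_closedBall.2 (by simpa [dist_eq_norm] using hθ))
  -- fderiv of gradient
  have hev : gradient (Jhat μ) =ᶠ[nhds θ] fun x => H (x - θs) - μ • G x := by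
    filter_upwards [hU.mem_nhds hθU] with x hx
    exact (hgrad μ x hx).gradient
  have hGd : HasFDerivAt G (fderiv ℝ G θ) θ :=
    ((hGdiff θ hθU).differentiableAt (hU.mem_nhds hθU)).hasFDerivAt
  have hHd : HasFDerivAt (fun x : EuclideanSpace ℝ (Fin n) => H (x - θs) - μ • G x)
      (H - μ • fderiv ℝ G θ) θ := by
    have h1 : HasFDerivAt (fun x : EuclideanSpace ℝ (Fin n) => H x - H θs) H θ := H.hasFDerivAt.sub_const (H θs)
    have h1' : HasFDerivAt (fun x : EuclideanSpace ℝ (Fin n) => H (x - θs)) H θ := by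
      convert h1 using 2 with x
      rw [map_sub]
    exact h1'.sub (hGd.const_smul μ)
  have hfd : fderiv ℝ (gradient (Jhat μ)) θ = H - μ • fderiv ℝ G θ := by
    rw [hev.fderiv_eq, hHd.fderiv]
  rw [hfd]
  have hexp : ⟪v, (H - μ • fderiv ℝ G θ) v⟫
      = ⟪v, H v⟫ - μ * ⟪v, fderiv ℝ G θ v⟫ := by
    simp only [ContinuousLinearMap.coe_sub', Pi.sub_apply, ContinuousLinearMap.coe_smul',
      Pi.smul_apply]
    rw [inner_sub_right, real_inner_smul_right]
  rw [hexp]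
  have hCθ : ‖fderiv ℝ G θ‖ ≤ C' := by
    have := hC θ (Metric.mem_closedBall.2 (by simpa [dist_eq_norm] using hθ))
    calc ‖fderiv ℝ G θ‖ ≤ C := this
      _ ≤ max C 0 := le_max_left _ _
      _ ≤ C' := by rw [hC'def]; linarith
  have hip : ⟪v, fderiv ℝ G θ v⟫ ≤ C' * ‖v‖ ^ 2 := by
    calc ⟪v, fderiv ℝ G θ v⟫ ≤ ‖v‖ * ‖fderiv ℝ G θ v‖ := real_inner_le_norm _ _
      _ ≤ ‖v‖ * (‖fderiv ℝ G θ‖ * ‖v‖) := by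
          apply mul_le_mul_of_nonneg_left ((fderiv ℝ G θ).le_opNorm v) (norm_nonneg v)
      _ ≤ ‖v‖ * (C' * ‖v‖) := by
          apply mul_le_mul_of_nonneg_left
            (mul_le_mul_of_nonneg_right hCθ (norm_nonneg v)) (norm_nonneg v)
      _ = C' * ‖v‖ ^ 2 := by ring
  have hlb := hlam_lb v
  have hμC : μ * C' < lam / 2 := by
    have h1 : μ < lam / (2 * C') := hμ.2
    calc μ * C' < lam / (2 * C') * C' := by
          exact mul_lt_mul_of_pos_right h1 hC'pos
      _ = lam / 2 := by field_simp
  have k1 : μ * ⟪v, fderiv ℝ G θ v⟫ ≤ μ * (C' * ‖v‖ ^ 2) :=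
    mul_le_mul_of_nonneg_left hip hμ.1.le
  have k2 : μ * C' * ‖v‖ ^ 2 ≤ lam / 2 * ‖v‖ ^ 2 :=
    mul_le_mul_of_nonneg_right hμC.le (sq_nonneg ‖v‖)
  have k3 : μ * (C' * ‖v‖ ^ 2) ≤ lam / 2 * ‖v‖ ^ 2 := by nlinarith [k2]
  have k4 : μ * ⟪v, fderiv ℝ G θ v⟫ ≤ lam / 2 * ‖v‖ ^ 2 := le_trans k1 k3
  linarith [hlb, k4]
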